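/- Let A ⊆ F_p be finite and K > 0. Then ∑_{ξ ≠ 0, E_+(A,ξA) ≤ |A|³/K} (E_+(A, ξA) − |A|⁴/p)² ≤ p|A|⁵/K. -/

import Mathlib

open Finset

/-- `E₊(A, ξA)`: number of quadruples `(a₁,a₂,a₃,a₄) ∈ A⁴` with `a₁ - a₂ = ξ(a₃ - a₄)`. -/
def addEnergy {p : ℕ} (A : Finset (ZMod p)) (ξ : ZMod p) : ℕ :=
  ((A ×ˢ A ×ˢ A ×ˢ A).filter
    (fun q => q.1 - q.2.1 = ξ * (q.2.2.1 - q.2.2.2))).card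

section aux
variable {p : ℕ}

/-- the fiber of `(a,c) ↦ a - ξ c` over `s` -/
def fib (A : Finset (ZMod p)) (ξ s : ZMod p) : Finset (ZMod p × ZMod p) :=
  (A ×ˢ A).filter (fun q => q.1 - ξ * q.2 = s)

lemma myEnergy_eq_sum_sq [NeZero p] (A : Finset (ZMod p)) (ξ : ZMod p) :
    addEnergy A ξ = ∑ s : ZMod p, (fib A ξ s).card ^ 2 := by
  have h1 : _root_.addEnergy A ξ =
      (((A ×ˢ A) ×ˢ (A ×ˢ A)).filter
        (fun r => r.1.1 - ξ * r.1.2 = r.2.1 - ξ * r.2.2)).card := by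
    apply card_nbij' (fun q => ((q.1, q.2.2.1), (q.2.1, q.2.2.2)))
      (fun r => (r.1.1, r.2.1, r.1.2, r.2.2))
    · rintro ⟨a, b, c, d⟩ hq
      simp only [mem_coe, mem_filter, mem_product] at hq ⊢
      obtain ⟨⟨ha, hb, hc, hd⟩, he⟩ := hq
      exact ⟨⟨⟨ha, hc⟩, hb, hd⟩, by linear_combination he⟩
    · rintro ⟨⟨a, c⟩, b, d⟩ hr
      simp only [mem_coe, mem_filter, mem_product] at hr ⊢
      obtain ⟨⟨⟨ha, hc⟩, hb, hd⟩, he⟩ := hr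
      exact ⟨⟨ha, hb, hc, hd⟩, by linear_combination he⟩
    · rintro ⟨a, b, c, d⟩ _; rfl
    · rintro ⟨⟨a, c⟩, b, d⟩ _; rfl
  rw [h1, card_eq_sum_card_fiberwise (f := fun r => r.1.1 - ξ * r.1.2)
    (t := (univ : Finset (ZMod p))) (fun _ _ => mem_univ _)]
  refine Finset.sum_congr rfl fun s _ => ?_
  rw [sq, ← card_product]
  congr 1
  ext r
  simp only [filter_filter, mem_filter, mem_product, fib]
  aesop

lemma sum_fib [NeZero p] (A : Finset (ZMod p)) (ξ : ZMod p) :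
    ∑ s : ZMod p, (fib A ξ s).card = A.card ^ 2 := by
  unfold fib
  rw [← card_eq_sum_card_fiberwise (f := fun q : ZMod p × ZMod p => q.1 - ξ * q.2)
    (t := (univ : Finset (ZMod p))) (fun _ _ => mem_univ _), card_product, sq]

lemma le_addEnergy [NeZero p] (A : Finset (ZMod p)) (ξ : ZMod p) :
    (A.card : ℝ) ^ 4 / p ≤ (_root_.addEnergy A ξ : ℝ) := by
  have hp : (0 : ℝ) < p := by exact_mod_cast Nat.pos_of_ne_zero (NeZero.ne p)
  rw [div_le_iff₀ hp]
  have cs : (∑ s : ZMod p, ((fib A ξ s).card : ℝ)) ^ 2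
      ≤ (univ : Finset (ZMod p)).card * ∑ s : ZMod p, ((fib A ξ s).card : ℝ) ^ 2 :=
    sq_sum_le_card_mul_sum_sq
  have h2 : ∑ s : ZMod p, ((fib A ξ s).card : ℝ) = (A.card : ℝ) ^ 2 := by
    rw [← Nat.cast_sum, sum_fib]; push_cast; ring
  rw [h2, card_univ, ZMod.card] at cs
  rw [myEnergy_eq_sum_sq]
  push_cast
  calc (A.card : ℝ) ^ 4 = ((A.card : ℝ) ^ 2) ^ 2 := by ring
    _ ≤ p * ∑ s : ZMod p, ((fib A ξ s).card : ℝ) ^ 2 := cs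
    _ = (∑ s : ZMod p, ((fib A ξ s).card : ℝ) ^ 2) * p := by ring

lemma sum_addEnergy [Fact p.Prime] [NeZero p] (A : Finset (ZMod p)) :
    ∑ ξ : ZMod p, _root_.addEnergy A ξ ≤ A.card ^ 4 + p * A.card ^ 2 := by
  have key : ∑ ξ : ZMod p, _root_.addEnergy A ξ
      = ∑ q ∈ A ×ˢ A ×ˢ A ×ˢ A,
          (univ.filter (fun ξ : ZMod p => q.1 - q.2.1 = ξ * (q.2.2.1 - q.2.2.2))).card := by
    unfold _root_.addEnergy
    simp_rw [card_filter]
    rw [Finset.sum_comm]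
  rw [key]
  have hbound : ∀ q ∈ A ×ˢ A ×ˢ A ×ˢ A,
      (univ.filter (fun ξ : ZMod p => q.1 - q.2.1 = ξ * (q.2.2.1 - q.2.2.2))).card
        ≤ 1 + (if q.1 = q.2.1 ∧ q.2.2.1 = q.2.2.2 then p else 0) := by
    rintro ⟨a, b, c, d⟩ _
    dsimp only
    by_cases hcd : c = d
    · by_cases hab : a = b
      · subst hab; subst hcd
        rw [if_pos ⟨rfl, rfl⟩]
        calc _ ≤ (univ : Finset (ZMod p)).card := card_filter_le _ _
          _ = p := by rw [card_univ, ZMod.card]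
          _ ≤ 1 + p := by omega
      · have he : (univ.filter (fun ξ : ZMod p => a - b = ξ * (c - d))) = ∅ := by
          ext ξ
          simp only [mem_filter, mem_univ, true_and, Finset.notMem_empty, iff_false]
          rw [hcd]
          intro h
          apply hab
          rw [← sub_eq_zero]
          simpa using h
        simp [he]
    · have h1 : (univ.filter (fun ξ : ZMod p => a - b = ξ * (c - d))).card ≤ 1 := by
        apply Finset.card_le_one.mpr
        intro ξ₁ h₁ ξ₂ h₂
        simp only [mem_filter] at h₁ h₂
        have : ξ₁ * (c - d) = ξ₂ * (c - d) := by rw [← h₁.2, ← h₂.2]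
        exact mul_right_cancel₀ (sub_ne_zero.mpr hcd) this
      rw [if_neg (fun h => hcd h.2)]
      omega
  have hdiag : ((A ×ˢ A ×ˢ A ×ˢ A).filter
      (fun q => q.1 = q.2.1 ∧ q.2.2.1 = q.2.2.2)).card ≤ A.card ^ 2 := by
    rw [sq, ← card_product]
    apply Finset.card_le_card_of_injOn (fun q => (q.1, q.2.2.1))
    · rintro ⟨a, b, c, d⟩ hq
      simp only [mem_coe, mem_filter, mem_product] at hq ⊢
      exact ⟨hq.1.1, hq.1.2.2.1⟩
    · rintro ⟨a, b, c, d⟩ hq ⟨a', b', c', d'⟩ hq' h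
      simp only [coe_filter, Set.mem_setOf_eq, Prod.mk.injEq] at hq hq' h
      obtain ⟨h1, h2⟩ := h
      simp only [Prod.mk.injEq]
      refine ⟨h1, ?_, h2, ?_⟩
      · rw [← hq.2.1, ← hq'.2.1, h1]
      · rw [← hq.2.2, ← hq'.2.2, h2]
  calc _ ≤ ∑ q ∈ A ×ˢ A ×ˢ A ×ˢ A,
        (1 + (if q.1 = q.2.1 ∧ q.2.2.1 = q.2.2.2 then p else 0)) := Finset.sum_le_sum hbound
    _ = (A ×ˢ A ×ˢ A ×ˢ A).card
        + ∑ q ∈ A ×ˢ A ×ˢ A ×ˢ A, (if q.1 = q.2.1 ∧ q.2.2.1 = q.2.2.2 then p else 0) := by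
        rw [Finset.sum_add_distrib, Finset.sum_const, smul_eq_mul, mul_one]
    _ ≤ A.card ^ 4 + p * A.card ^ 2 := by
        gcongr
        · simp only [card_product]; ring_nf; exact le_refl _
        · rw [← Finset.sum_filter, Finset.sum_const, smul_eq_mul, mul_comm]
          exact Nat.mul_le_mul_left p hdiag

end aux

theorem stmt12 {p : ℕ} [Fact p.Prime] (A : Finset (ZMod p)) (K : ℝ) (hK : 0 < K) :
    ∑ ξ ∈ (univ : Finset (ZMod p)).filter
        (fun ξ : ZMod p => ξ ≠ 0 ∧
          (addEnergy A ξ : ℝ) ≤ (A.card : ℝ) ^ 3 / K),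
        ((addEnergy A ξ : ℝ) - (A.card : ℝ) ^ 4 / p) ^ 2
      ≤ p * (A.card : ℝ) ^ 5 / K := by
  have hpp : p.Prime := Fact.out
  haveI : NeZero p := ⟨hpp.ne_zero⟩
  have hp : (0 : ℝ) < p := by exact_mod_cast hpp.pos
  set m : ℝ := (A.card : ℝ) ^ 4 / p with hm
  set F := (univ : Finset (ZMod p)).filter
      (fun ξ : ZMod p => ξ ≠ 0 ∧ (addEnergy A ξ : ℝ) ≤ (A.card : ℝ) ^ 3 / K) with hF
  have hnonneg : ∀ ξ : ZMod p, 0 ≤ (addEnergy A ξ : ℝ) - m :=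
    fun ξ => sub_nonneg.mpr (le_addEnergy A ξ)
  have step1 : ∑ ξ ∈ F, ((addEnergy A ξ : ℝ) - m) ^ 2
      ≤ ((A.card : ℝ) ^ 3 / K) * ∑ ξ ∈ F, ((addEnergy A ξ : ℝ) - m) := by
    rw [Finset.mul_sum]
    apply Finset.sum_le_sum
    intro ξ hξ
    rw [hF, mem_filter] at hξ
    have h1 : (addEnergy A ξ : ℝ) - m ≤ (A.card : ℝ) ^ 3 / K := by
      have : m ≥ 0 := by positivity
      linarith [hξ.2.2]
    rw [sq]
    exact mul_le_mul_of_nonneg_right h1 (hnonneg ξ)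
  have step2 : ∑ ξ ∈ F, ((addEnergy A ξ : ℝ) - m)
      ≤ ∑ ξ : ZMod p, ((addEnergy A ξ : ℝ) - m) :=
    Finset.sum_le_sum_of_subset_of_nonneg (filter_subset _ _)
      (fun ξ _ _ => hnonneg ξ)
  have step3 : ∑ ξ : ZMod p, ((addEnergy A ξ : ℝ) - m) ≤ p * (A.card : ℝ) ^ 2 := by
    rw [Finset.sum_sub_distrib, Finset.sum_const, card_univ, ZMod.card, nsmul_eq_mul]
    have h4 : (p : ℝ) * m = (A.card : ℝ) ^ 4 := by
      rw [hm]; field_simp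
    have h5 : (∑ ξ : ZMod p, (addEnergy A ξ : ℝ)) ≤ (A.card : ℝ) ^ 4 + p * (A.card : ℝ) ^ 2 := by
      rw [← Nat.cast_sum]
      exact_mod_cast Nat.cast_le.mpr (sum_addEnergy A)
    linarith
  have hA3K : 0 ≤ (A.card : ℝ) ^ 3 / K := by positivity
  calc ∑ ξ ∈ F, ((addEnergy A ξ : ℝ) - m) ^ 2
      ≤ ((A.card : ℝ) ^ 3 / K) * ∑ ξ ∈ F, ((addEnergy A ξ : ℝ) - m) := step1
    _ ≤ ((A.card : ℝ) ^ 3 / K) * (p * (A.card : ℝ) ^ 2) :=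
        mul_le_mul_of_nonneg_left (step2.trans step3) hA3K
    _ = p * (A.card : ℝ) ^ 5 / K := by ring
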